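/- If (a_1,…,a_n) is an n-tuple of strictly positive integers with M_n(a_1,…,a_n) = T or M_n(a_1,…,a_n) = −T, then there exists an index i with a_i = 1. (Since T has infinite order in SL_2(ℤ), this shows the converse of the finite-order criterion fails.) -/

import Mathlib

/-- The elementary matrix `[[a, -1], [1, 0]]`. -/
def genMat (a : ℤ) : Matrix (Fin 2) (Fin 2) ℤ := !![a, -1; 1, 0]

/-- `Mprod [a₁, …, aₙ] = [[aₙ,-1],[1,0]] ⋯ [[a₁,-1],[1,0]]`. -/
def Mprod (l : List ℤ) : Matrix (Fin 2) (Fin 2) ℤ := ((l.map genMat).reverse).prod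

lemma Mprod_nil : Mprod [] = 1 := rfl

lemma Mprod_cons (a : ℤ) (l : List ℤ) : Mprod (a :: l) = Mprod l * genMat a := by
  simp [Mprod]

lemma key : ∀ (l : List ℤ), l ≠ [] → (∀ x ∈ l, 2 ≤ x) →
    (-(Mprod l 0 1) ≥ 1 ∧ Mprod l 0 0 > -(Mprod l 0 1)) ∧
    (-(Mprod l 1 1) ≥ 0 ∧ Mprod l 1 0 > -(Mprod l 1 1)) := by
  intro l
  induction l with
  | nil => intro h; exact absurd rfl h
  | cons a l ih =>
    intro _ hge
    have ha : 2 ≤ a := hge a List.mem_cons_self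
    rcases eq_or_ne l [] with rfl | hne
    · simp [Mprod_cons, Mprod_nil, genMat, Matrix.one_mul]
      omega
    · obtain ⟨⟨h1, h2⟩, ⟨h3, h4⟩⟩ := ih hne (fun x hx => hge x (List.mem_cons_of_mem a hx))
      set M := Mprod l with hM
      have e00 : Mprod (a :: l) 0 0 = M 0 0 * a + M 0 1 := by
        simp [Mprod_cons, genMat, Matrix.mul_apply, Fin.sum_univ_two, hM]
      have e01 : Mprod (a :: l) 0 1 = -(M 0 0) := by
        simp [Mprod_cons, genMat, Matrix.mul_apply, Fin.sum_univ_two, hM]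
      have e10 : Mprod (a :: l) 1 0 = M 1 0 * a + M 1 1 := by
        simp [Mprod_cons, genMat, Matrix.mul_apply, Fin.sum_univ_two, hM]
      have e11 : Mprod (a :: l) 1 1 = -(M 1 0) := by
        simp [Mprod_cons, genMat, Matrix.mul_apply, Fin.sum_univ_two, hM]
      rw [e00, e01, e10, e11]
      constructor
      · constructor
        · omega
        · nlinarith
      · constructor
        · omega
        · nlinarith

/-- Every positive solution of `Mₙ(a₁,…,aₙ) = ±T` contains a 1. -/
theorem stmt19 (l : List ℤ) (hpos : ∀ x ∈ l, 0 < x)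
    (hsol : Mprod l = !![1, 1; 0, 1] ∨ Mprod l = -!![1, 1; 0, 1]) :
    ∃ x ∈ l, x = 1 := by
  by_contra h
  push_neg at h
  have hge : ∀ x ∈ l, 2 ≤ x := fun x hx => by
    have := hpos x hx; have := h x hx; omega
  rcases eq_or_ne l [] with rfl | hne
  · rcases hsol with hs | hs
    · have := congrFun (congrFun (Mprod_nil ▸ hs) 0) 1
      simp at this
    · have := congrFun (congrFun (Mprod_nil ▸ hs) 0) 1
      simp at this
  · obtain ⟨_, _, h4⟩ := key l hne hge
    have h10 : Mprod l 1 0 = 0 := by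
      rcases hsol with hs | hs <;> rw [hs] <;> simp
    have h11 : Mprod l 1 1 = 1 ∨ Mprod l 1 1 = -1 := by
      rcases hsol with hs | hs <;> rw [hs] <;> simp
    omega
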